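/- Let V be a real Hilbert space with inner product a, and P₀,…,P_N orthogonal projections satisfying the stable decomposition assumption with constant C₀ (including the coarse space) and the strengthened Cauchy–Schwarz assumption with matrix ℰ among the local spaces. Let P = Σ_{i=0}^N Pᵢ. Then for every e ∈ V and τ > 0, a((I − τP)e, (I − τP)e) ≤ (1 − 2τ/(2+C₀) + 2(‖ℰ‖₂² + 1)τ²) a(e,e). -/

import Mathlib

open RealInnerProductSpace

/-- Spectral norm (operator 2-norm) of a real matrix. -/
noncomputable def matSpectralNorm {N : ℕ} (E : Matrix (Fin N) (Fin N) ℝ) : ℝ :=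
  ‖(Matrix.toEuclideanCLM (𝕜 := ℝ) E : EuclideanSpace ℝ (Fin N) →L[ℝ] EuclideanSpace ℝ (Fin N))‖

lemma quad_form_le_spectralNorm {N : ℕ} (E : Matrix (Fin N) (Fin N) ℝ) (x : Fin N → ℝ) :
    ∑ i, ∑ j, E i j * x i * x j ≤ matSpectralNorm E * ∑ i, x i ^ 2 := by
  classical
  set T := (Matrix.toEuclideanCLM (𝕜 := ℝ) E :
    EuclideanSpace ℝ (Fin N) →L[ℝ] EuclideanSpace ℝ (Fin N)) with hT
  set y : EuclideanSpace ℝ (Fin N) := (WithLp.equiv 2 (Fin N → ℝ)).symm x with hy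
  have hyi : ∀ i, y i = x i := fun i => rfl
  have hTy : ∀ i, T y i = ∑ j, E i j * x j := by
    intro i
    have : T y = (WithLp.equiv 2 (Fin N → ℝ)).symm (Matrix.toLin' E x) := by
      exact rfl
    rw [this]
    simp [Matrix.toLin'_apply, Matrix.mulVec, dotProduct]
  have h1 : ⟪y, T y⟫ = ∑ i, ∑ j, E i j * x i * x j := by
    rw [PiLp.inner_apply]
    refine Finset.sum_congr rfl fun i _ => ?_
    rw [RCLike.inner_apply, hyi, hTy, starRingEnd_apply, star_trivial, Finset.sum_mul]
    refine Finset.sum_congr rfl fun j _ => by ring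
  have h2 : ⟪y, T y⟫ ≤ ‖y‖ * ‖T y‖ := real_inner_le_norm _ _
  have h3 : ‖T y‖ ≤ ‖T‖ * ‖y‖ := T.le_opNorm y
  have h4 : ‖y‖ ^ 2 = ∑ i, x i ^ 2 := by
    rw [← real_inner_self_eq_norm_sq, PiLp.inner_apply]
    refine Finset.sum_congr rfl fun i _ => by
      rw [RCLike.inner_apply, hyi, starRingEnd_apply, star_trivial]; ring
  have h5 : ⟪y, T y⟫ ≤ ‖T‖ * ‖y‖ ^ 2 := by
    nlinarith [norm_nonneg y, norm_nonneg (T y), ContinuousLinearMap.opNorm_nonneg T]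
  rw [h1, h4] at h5
  exact h5

/-- Two-level additive Schwarz error reduction:
`a((I − τP)e, (I − τP)e) ≤ (1 − 2τ/(2+C₀) + 2(‖ℰ‖₂² + 1)τ²) a(e,e)`. -/
theorem two_level_error_reduction {V : Type*} [NormedAddCommGroup V] [InnerProductSpace ℝ V]
    {N : ℕ} (Vs : Fin (N + 1) → Submodule ℝ V) (hclosed : ∀ i, IsClosed (Vs i : Set V))
    (P : Fin (N + 1) → V →ₗ[ℝ] V)
    (hPmem : ∀ i (v : V), P i v ∈ Vs i)
    (hPproj : ∀ i (v : V), ∀ w ∈ Vs i, ⟪P i v, w⟫ = ⟪v, w⟫)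
    (C₀ : ℝ) (hC₀ : 0 < C₀)
    (hdecomp : ∀ v : V, ∃ vi : Fin (N + 1) → V, (∀ i, vi i ∈ Vs i) ∧ v = ∑ i, vi i ∧
      ∑ i, ⟪vi i, vi i⟫ ≤ C₀ * ⟪v, v⟫)
    (E : Matrix (Fin N) (Fin N) ℝ)
    (hE0 : ∀ i j, 0 ≤ E i j) (hE1 : ∀ i j, E i j ≤ 1)
    (hCS : ∀ (i j : Fin N), ∀ vi ∈ Vs i.succ, ∀ vj ∈ Vs j.succ,
      ⟪vi, vj⟫ ≤ E i j * Real.sqrt ⟪vi, vi⟫ * Real.sqrt ⟪vj, vj⟫) :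
    ∀ (e : V) (τ : ℝ), 0 < τ →
      ⟪e - τ • ∑ i, P i e, e - τ • ∑ i, P i e⟫
        ≤ (1 - 2 * τ / (2 + C₀) + 2 * ((matSpectralNorm E) ^ 2 + 1) * τ ^ 2) * ⟪e, e⟫ := by
  intro e τ hτ
  classical
  set u : V := ∑ i, P i e with hu
  set A : ℝ := ⟪e, e⟫ with hA
  set S : ℝ := ∑ i, ⟪P i e, P i e⟫ with hS
  have hA0 : 0 ≤ A := real_inner_self_nonneg
  have hS0 : 0 ≤ S := Finset.sum_nonneg fun i _ => real_inner_self_nonneg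
  -- (a) ⟪e, u⟫ = S
  have ha : ⟪e, u⟫ = S := by
    rw [hu, inner_sum]
    exact Finset.sum_congr rfl fun i _ => (hPproj i e (P i e) (hPmem i e)).symm
  -- (b) A ≤ C₀ * S
  have hb : A ≤ C₀ * S := by
    obtain ⟨vi, hmem, hsum, hstab⟩ := hdecomp e
    have hb1 : A = ∑ i, ⟪P i e, vi i⟫ := by
      calc A = ⟪e, ∑ i, vi i⟫ := by rw [← hsum]
        _ = ∑ i, ⟪e, vi i⟫ := inner_sum _ _ _
        _ = ∑ i, ⟪P i e, vi i⟫ :=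
          Finset.sum_congr rfl fun i _ => (hPproj i e (vi i) (hmem i)).symm
    have hb2 : A ≤ ∑ i, ‖P i e‖ * ‖vi i‖ := by
      rw [hb1]
      exact Finset.sum_le_sum fun i _ => real_inner_le_norm _ _
    have hb3 : (∑ i, ‖P i e‖ * ‖vi i‖) ^ 2 ≤
        (∑ i, ‖P i e‖ ^ 2) * (∑ i, ‖vi i‖ ^ 2) :=
      Finset.sum_mul_sq_le_sq_mul_sq _ _ _
    have hSeq : (∑ i, ‖P i e‖ ^ 2) = S := by
      exact Finset.sum_congr rfl fun i _ => (real_inner_self_eq_norm_sq _).symm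
    have hveq : (∑ i, ‖vi i‖ ^ 2) ≤ C₀ * A := by
      calc (∑ i, ‖vi i‖ ^ 2) = ∑ i, ⟪vi i, vi i⟫ :=
            Finset.sum_congr rfl fun i _ => (real_inner_self_eq_norm_sq _).symm
        _ ≤ C₀ * A := hstab
    have hb4 : A ^ 2 ≤ S * (C₀ * A) := by
      have h1 : A ^ 2 ≤ (∑ i, ‖P i e‖ * ‖vi i‖) ^ 2 := by
        apply pow_le_pow_left₀ hA0 hb2
      calc A ^ 2 ≤ (∑ i, ‖P i e‖ * ‖vi i‖) ^ 2 := h1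
        _ ≤ (∑ i, ‖P i e‖ ^ 2) * (∑ i, ‖vi i‖ ^ 2) := hb3
        _ ≤ S * (C₀ * A) := by
            rw [hSeq]
            exact mul_le_mul_of_nonneg_left hveq hS0
    rcases eq_or_lt_of_le hA0 with h | h
    · rw [← h]; positivity
    · nlinarith
  -- (c) norm bound for P 0 e
  have hc : ⟪P 0 e, P 0 e⟫ ≤ A := by
    have h1 : ⟪P 0 e, P 0 e⟫ = ⟪e, P 0 e⟫ := hPproj 0 e (P 0 e) (hPmem 0 e)
    have h2 : ⟪e, P 0 e⟫ ≤ ‖e‖ * ‖P 0 e‖ := real_inner_le_norm _ _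
    have h3 : ⟪P 0 e, P 0 e⟫ = ‖P 0 e‖ ^ 2 := real_inner_self_eq_norm_sq _
    have h4 : A = ‖e‖ ^ 2 := real_inner_self_eq_norm_sq _
    nlinarith [norm_nonneg e, norm_nonneg (P 0 e)]
  -- (d) bound for q = ∑ i : Fin N, P i.succ e
  set q : V := ∑ i : Fin N, P i.succ e with hq
  have hd : ⟪q, q⟫ ≤ matSpectralNorm E ^ 2 * A := by
    set x : Fin N → ℝ := fun i => ‖P i.succ e‖ with hx
    have hd1 : ⟪q, q⟫ ≤ ∑ i, ∑ j, E i j * x i * x j := by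
      rw [hq, sum_inner]
      refine Finset.sum_le_sum fun i _ => ?_
      rw [inner_sum]
      refine Finset.sum_le_sum fun j _ => ?_
      have := hCS i j (P i.succ e) (hPmem _ e) (P j.succ e) (hPmem _ e)
      have hsi : Real.sqrt ⟪P i.succ e, P i.succ e⟫ = x i := by
        rw [real_inner_self_eq_norm_sq, Real.sqrt_sq (norm_nonneg _)]
      have hsj : Real.sqrt ⟪P j.succ e, P j.succ e⟫ = x j := by
        rw [real_inner_self_eq_norm_sq, Real.sqrt_sq (norm_nonneg _)]
      rw [hsi, hsj] at this
      exact this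
    have hd2 : ⟪q, q⟫ ≤ matSpectralNorm E * ∑ i, x i ^ 2 :=
      le_trans hd1 (quad_form_le_spectralNorm E x)
    have hd3 : (∑ i, x i ^ 2) = ⟪e, q⟫ := by
      rw [hq, inner_sum]
      refine Finset.sum_congr rfl fun i _ => ?_
      rw [← hPproj i.succ e (P i.succ e) (hPmem _ e), real_inner_self_eq_norm_sq]
    have hd4 : ⟪e, q⟫ ≤ ‖e‖ * ‖q‖ := real_inner_le_norm _ _
    have hqn : ⟪q, q⟫ = ‖q‖ ^ 2 := real_inner_self_eq_norm_sq _
    have hAn : A = ‖e‖ ^ 2 := real_inner_self_eq_norm_sq _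
    have hEnn : 0 ≤ matSpectralNorm E := norm_nonneg _
    -- ‖q‖² ≤ ‖E‖ ‖e‖ ‖q‖  ⇒  ‖q‖² ≤ ‖E‖² ‖e‖²
    have key : ‖q‖ ^ 2 ≤ matSpectralNorm E * (‖e‖ * ‖q‖) := by
      rw [← hqn]
      calc ⟪q, q⟫ ≤ matSpectralNorm E * ⟪e, q⟫ := by rw [← hd3]; exact hd2
        _ ≤ matSpectralNorm E * (‖e‖ * ‖q‖) := mul_le_mul_of_nonneg_left hd4 hEnn
    rw [hqn, hAn]
    nlinarith [norm_nonneg q, norm_nonneg e, sq_nonneg (matSpectralNorm E * ‖e‖ - ‖q‖)]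
  -- (e) ⟪u, u⟫ ≤ 2 (‖E‖² + 1) A
  have hsplit : u = P 0 e + q := by
    rw [hu, hq, Fin.sum_univ_succ]
  have he : ⟪u, u⟫ ≤ 2 * (matSpectralNorm E ^ 2 + 1) * A := by
    have hexp : ⟪u, u⟫ = ⟪P 0 e, P 0 e⟫ + 2 * ⟪P 0 e, q⟫ + ⟪q, q⟫ := by
      rw [hsplit, inner_add_add_self, real_inner_comm q (P 0 e)]; ring
    have hcross : 2 * ⟪P 0 e, q⟫ ≤ ⟪P 0 e, P 0 e⟫ + ⟪q, q⟫ := by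
      have h1 : ⟪P 0 e, q⟫ ≤ ‖P 0 e‖ * ‖q‖ := real_inner_le_norm _ _
      have h2 : ⟪P 0 e, P 0 e⟫ = ‖P 0 e‖ ^ 2 := real_inner_self_eq_norm_sq _
      have h3 : ⟪q, q⟫ = ‖q‖ ^ 2 := real_inner_self_eq_norm_sq _
      nlinarith [sq_nonneg (‖P 0 e‖ - ‖q‖)]
    nlinarith
  -- expand the left-hand side
  have hexp : ⟪e - τ • u, e - τ • u⟫ = A - 2 * τ * ⟪e, u⟫ + τ ^ 2 * ⟪u, u⟫ := by
    simp only [inner_sub_left, inner_sub_right, real_inner_smul_left,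
      real_inner_smul_right, real_inner_comm u e]
    ring
  rw [hexp, ha]
  have h2C : (0 : ℝ) < 2 + C₀ := by linarith
  have hkey : 2 * τ / (2 + C₀) * A ≤ 2 * τ * S := by
    rw [div_mul_eq_mul_div, div_le_iff₀ h2C]
    nlinarith
  have hquad : τ ^ 2 * ⟪u, u⟫ ≤ 2 * (matSpectralNorm E ^ 2 + 1) * τ ^ 2 * A := by
    nlinarith [sq_nonneg τ]
  nlinarith
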